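/- Let n ≥ 2, let U : Finset (Fin n) → ℝ be a utility function, let Z = 2·Σ_{k=1}^{n−1} 1/k and q_k = (1/Z)·(1/k + 1/(n−k)) for k = 1, ..., n−1, and for each player i define the Shapley value s_i = Σ_{S ⊆ univ \ {i}} (|S|! · (n − 1 − |S|)!)/n! · (U(S ∪ {i}) − U(S)). Then for any two distinct players i ≠ j, Z · Σ_{k=1}^{n−1} q_k · (1/C(n, k)) · Σ_{S ⊆ univ, |S| = k} U(S) · (1_{i ∈ S} − 1_{j ∈ S}) = s_i − s_j, where 1_{i ∈ S} is 1 if i ∈ S and 0 otherwise, and the inner sum runs over all size-k subsets of the n players. -/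

import Mathlib

open Finset

/-- The unbiasedness identity behind the group-testing estimator of Algorithm 3:
with sampling weights `q_k = (1/Z)(1/k + 1/(n−k))`, `Z = 2·Σ_{k=1}^{n−1} 1/k`,
the expectation `Z · Σ_{k=1}^{n−1} q_k · (1/C(n,k)) · Σ_{|S|=k} U(S)·(1_{i∈S} − 1_{j∈S})`
equals the Shapley value difference `s_i − s_j` for any two distinct players `i ≠ j`. -/
theorem group_testing_estimator_unbiased
    {n : ℕ} (hn : 2 ≤ n) (U : Finset (Fin n) → ℝ)
    (Z : ℝ) (q : ℕ → ℝ)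
    (hZ : Z = 2 * ∑ k ∈ Finset.Icc 1 (n - 1), (1 : ℝ) / k)
    (hq : ∀ k ∈ Finset.Icc 1 (n - 1),
      q k = (1 / Z) * (1 / (k : ℝ) + 1 / ((n : ℝ) - k)))
    (s : Fin n → ℝ)
    (hs : ∀ i : Fin n, s i =
      ∑ S ∈ (Finset.univ.erase i).powerset,
        ((Nat.factorial S.card * Nat.factorial (n - 1 - S.card) : ℕ) : ℝ)
          / ((Nat.factorial n : ℕ) : ℝ) * (U (insert i S) - U S))
    (i j : Fin n) (hij : i ≠ j) :
    Z * ∑ k ∈ Finset.Icc 1 (n - 1),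
      q k * (1 / ((Nat.choose n k : ℕ) : ℝ)) *
        ∑ S ∈ Finset.powersetCard k (Finset.univ : Finset (Fin n)),
          U S * ((if i ∈ S then (1 : ℝ) else 0) - (if j ∈ S then (1 : ℝ) else 0)) =
    s i - s j := by
  classical
  set w : ℕ → ℝ := fun m =>
    ((Nat.factorial m * Nat.factorial (n - 1 - m) : ℕ) : ℝ) / ((Nat.factorial n : ℕ) : ℝ)
    with hw
  -- Z is positive
  have hZpos : 0 < Z := by
    rw [hZ]
    have h1 : (1 : ℕ) ∈ Finset.Icc 1 (n - 1) := by
      simp only [Finset.mem_Icc]; omega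
    have : 0 < ∑ k ∈ Finset.Icc 1 (n - 1), (1 : ℝ) / k := by
      apply Finset.sum_pos
      · intro k hk
        simp only [Finset.mem_Icc] at hk
        have : (0 : ℝ) < k := by exact_mod_cast hk.1
        positivity
      · exact ⟨1, h1⟩
    linarith
  have hZne : Z ≠ 0 := ne_of_gt hZpos
  -- key arithmetic identity
  have hkey : ∀ k : ℕ, 1 ≤ k → k ≤ n - 1 →
      (1 / (k : ℝ) + 1 / ((n : ℝ) - k)) * (1 / ((Nat.choose n k : ℕ) : ℝ))
        = w (k - 1) + w k := by
    intro k hk1 hk2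
    have hkn : k ≤ n := by omega
    have hk0 : k ≠ 0 := by omega
    have hnk0 : n - k ≠ 0 := by omega
    have hc0 : ((n.choose k : ℕ) : ℝ) ≠ 0 :=
      Nat.cast_ne_zero.2 (Nat.choose_pos hkn).ne'
    have hnf0 : ((n.factorial : ℕ) : ℝ) ≠ 0 :=
      Nat.cast_ne_zero.2 n.factorial_ne_zero
    have hfact : ((n.choose k : ℕ) : ℝ) * (k.factorial : ℝ) * (((n - k).factorial : ℕ) : ℝ)
        = (n.factorial : ℝ) := by
      exact_mod_cast congrArg (Nat.cast : ℕ → ℝ)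
        (Nat.choose_mul_factorial_mul_factorial hkn)
    have hek : ((k.factorial : ℕ) : ℝ) = (k : ℝ) * ((k - 1).factorial : ℕ) := by
      exact_mod_cast congrArg (Nat.cast : ℕ → ℝ)
        (Nat.mul_factorial_pred hk0).symm
    have hidx2 : n - 1 - k = (n - k) - 1 := by omega
    have henk : (((n - k).factorial : ℕ) : ℝ)
        = ((n - k : ℕ) : ℝ) * ((n - 1 - k).factorial : ℕ) := by
      rw [hidx2]
      exact_mod_cast congrArg (Nat.cast : ℕ → ℝ)
        (Nat.mul_factorial_pred hnk0).symm
    have hidx : n - 1 - (k - 1) = n - k := by omega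
    have hcast : (n : ℝ) - k = ((n - k : ℕ) : ℝ) := by
      rw [Nat.cast_sub hkn]
    have hK : (k : ℝ) ≠ 0 := Nat.cast_ne_zero.2 hk0
    have hNK : ((n - k : ℕ) : ℝ) ≠ 0 := Nat.cast_ne_zero.2 hnk0
    have hA0 : (((k - 1).factorial : ℕ) : ℝ) ≠ 0 :=
      Nat.cast_ne_zero.2 (k - 1).factorial_ne_zero
    have hB0 : (((n - 1 - k).factorial : ℕ) : ℝ) ≠ 0 :=
      Nat.cast_ne_zero.2 (n - 1 - k).factorial_ne_zero
    have hF : ((n.factorial : ℕ) : ℝ)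
        = ((n.choose k : ℕ) : ℝ) * ((k : ℝ) * ((k - 1).factorial : ℕ))
          * (((n - k : ℕ) : ℝ) * ((n - 1 - k).factorial : ℕ)) := by
      rw [← hek, ← henk]; exact hfact.symm
    simp only [hw, hidx]
    push_cast
    rw [hcast, hek, henk, hF]
    set C := ((n.choose k : ℕ) : ℝ) with hCdef
    set K := (k : ℝ) with hKdef
    set A := (((k - 1).factorial : ℕ) : ℝ) with hAdef
    set M := ((n - k : ℕ) : ℝ) with hMdef
    set B := (((n - 1 - k).factorial : ℕ) : ℝ) with hBdef
    field_simp
  -- rewrite s p as a sum over the full powerset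
  have hA : ∀ p : Fin n, s p =
      ∑ T ∈ (Finset.univ : Finset (Fin n)).powerset,
        (if p ∈ T then w (T.card - 1) * U T else -(w T.card * U T)) := by
    intro p
    have hsplit := Finset.sum_filter_add_sum_filter_not
      ((Finset.univ : Finset (Fin n)).powerset) (fun T => p ∈ T)
      (fun T => if p ∈ T then w (T.card - 1) * U T else -(w T.card * U T))
    rw [← hsplit]
    have hfil2 : ((Finset.univ : Finset (Fin n)).powerset).filter (fun T => ¬ p ∈ T)
        = (Finset.univ.erase p).powerset := by
      ext T
      simp [Finset.subset_erase]
    have himg : ((Finset.univ : Finset (Fin n)).powerset).filter (fun T => p ∈ T)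
        = ((Finset.univ.erase p).powerset).image (insert p) := by
      ext T
      simp only [Finset.mem_filter, Finset.mem_powerset, Finset.mem_image,
        Finset.subset_erase]
      constructor
      · rintro ⟨-, hpT⟩
        exact ⟨T.erase p, ⟨Finset.subset_univ _,
          Finset.notMem_erase p T⟩, Finset.insert_erase hpT⟩
      · rintro ⟨S, ⟨-, hpS⟩, rfl⟩
        exact ⟨Finset.subset_univ _, Finset.mem_insert_self p S⟩
    have hinj : ∀ S1 ∈ (Finset.univ.erase p).powerset, ∀ S2 ∈ (Finset.univ.erase p).powerset,
        insert p S1 = insert p S2 → S1 = S2 := by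
      intro S1 h1 S2 h2 h
      simp only [Finset.mem_powerset, Finset.subset_erase] at h1 h2
      have := congrArg (fun T => Finset.erase T p) h
      simpa [Finset.erase_insert h1.2, Finset.erase_insert h2.2] using this
    rw [himg, Finset.sum_image hinj, hfil2, hs p]
    have : ∀ S ∈ (Finset.univ.erase p).powerset,
        (if p ∈ insert p S then w ((insert p S).card - 1) * U (insert p S)
          else -(w (insert p S).card * U (insert p S)))
        = w S.card * U (insert p S) := by
      intro S hS
      simp only [Finset.mem_powerset, Finset.subset_erase] at hS
      rw [if_pos (Finset.mem_insert_self p S), Finset.card_insert_of_notMem hS.2]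
      simp
    rw [Finset.sum_congr rfl this]
    have h2 : ∀ x ∈ (Finset.univ.erase p).powerset,
        (if p ∈ x then w (x.card - 1) * U x else -(w x.card * U x)) = -(w x.card * U x) := by
      intro x hx
      simp only [Finset.mem_powerset, Finset.subset_erase] at hx
      rw [if_neg hx.2]
    rw [Finset.sum_congr rfl h2]
    simp_rw [mul_sub, sub_eq_add_neg]
    rw [Finset.sum_add_distrib]
  -- rewrite LHS
  have hL1 : Z * ∑ k ∈ Finset.Icc 1 (n - 1),
      q k * (1 / ((Nat.choose n k : ℕ) : ℝ)) *
        ∑ S ∈ Finset.powersetCard k (Finset.univ : Finset (Fin n)),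
          U S * ((if i ∈ S then (1 : ℝ) else 0) - (if j ∈ S then (1 : ℝ) else 0))
      = ∑ k ∈ Finset.Icc 1 (n - 1),
        ∑ S ∈ Finset.powersetCard k (Finset.univ : Finset (Fin n)),
          (w (S.card - 1) + w S.card) *
            (U S * ((if i ∈ S then (1 : ℝ) else 0) - (if j ∈ S then (1 : ℝ) else 0))) := by
    rw [Finset.mul_sum]
    refine Finset.sum_congr rfl fun k hk => ?_
    have hk' := Finset.mem_Icc.1 hk
    rw [hq k hk]
    set I := ∑ S ∈ Finset.powersetCard k (Finset.univ : Finset (Fin n)),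
        U S * ((if i ∈ S then (1 : ℝ) else 0) - (if j ∈ S then (1 : ℝ) else 0)) with hI
    have hZZ : Z * (1 / Z) = 1 := by field_simp
    have h1 : Z * (1 / Z * (1 / (k : ℝ) + 1 / ((n : ℝ) - k)) * (1 / ((Nat.choose n k : ℕ) : ℝ)) * I)
        = (1 / (k : ℝ) + 1 / ((n : ℝ) - k)) * (1 / ((Nat.choose n k : ℕ) : ℝ)) * I := by
      linear_combination ((1 / (k : ℝ) + 1 / ((n : ℝ) - k)) *
        (1 / ((Nat.choose n k : ℕ) : ℝ)) * I) * hZZ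
    rw [h1, hkey k hk'.1 hk'.2, hI, Finset.mul_sum]
    refine Finset.sum_congr rfl fun S hS => ?_
    rw [(Finset.mem_powersetCard.1 hS).2]
  set g : Finset (Fin n) → ℝ := fun S =>
    (w (S.card - 1) + w S.card) *
      (U S * ((if i ∈ S then (1 : ℝ) else 0) - (if j ∈ S then (1 : ℝ) else 0))) with hg
  have hcardu : (Finset.univ : Finset (Fin n)).card = n := by simp
  have hpt : ∀ T : Finset (Fin n), g T
      = (if i ∈ T then w (T.card - 1) * U T else -(w T.card * U T))
        - (if j ∈ T then w (T.card - 1) * U T else -(w T.card * U T)) := by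
    intro T
    by_cases hi : i ∈ T <;> by_cases hj : j ∈ T <;> simp [hg, hi, hj] <;> ring
  have hsub : Finset.Icc 1 (n - 1) ⊆ Finset.range (n + 1) := by
    intro k hk
    simp only [Finset.mem_Icc] at hk
    simp only [Finset.mem_range]
    omega
  have hvan : ∀ k ∈ Finset.range (n + 1), k ∉ Finset.Icc 1 (n - 1) →
      ∑ S ∈ Finset.powersetCard k (Finset.univ : Finset (Fin n)), g S = 0 := by
    intro k hk hk'
    simp only [Finset.mem_range] at hk
    simp only [Finset.mem_Icc] at hk'
    have hcase : k = 0 ∨ k = n := by omega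
    rcases hcase with rfl | hkn
    · simp [hg]
    · rw [hkn]
      have hps : Finset.powersetCard n (Finset.univ : Finset (Fin n)) = {Finset.univ} := by
        have h := Finset.powersetCard_self (Finset.univ : Finset (Fin n))
        rw [hcardu] at h
        exact h
      rw [hps]
      simp [hg]
  calc Z * ∑ k ∈ Finset.Icc 1 (n - 1),
      q k * (1 / ((Nat.choose n k : ℕ) : ℝ)) *
        ∑ S ∈ Finset.powersetCard k (Finset.univ : Finset (Fin n)),
          U S * ((if i ∈ S then (1 : ℝ) else 0) - (if j ∈ S then (1 : ℝ) else 0))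
      = ∑ k ∈ Finset.Icc 1 (n - 1),
          ∑ S ∈ Finset.powersetCard k (Finset.univ : Finset (Fin n)), g S := hL1
    _ = ∑ k ∈ Finset.range (n + 1),
          ∑ S ∈ Finset.powersetCard k (Finset.univ : Finset (Fin n)), g S :=
        Finset.sum_subset hsub hvan
    _ = ∑ S ∈ (Finset.univ : Finset (Fin n)).powerset, g S := by
        have h := Finset.sum_powerset (Finset.univ : Finset (Fin n)) g
        rw [hcardu] at h
        exact h.symm
    _ = ∑ T ∈ (Finset.univ : Finset (Fin n)).powerset,
          ((if i ∈ T then w (T.card - 1) * U T else -(w T.card * U T))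
            - (if j ∈ T then w (T.card - 1) * U T else -(w T.card * U T))) :=
        Finset.sum_congr rfl fun T _ => hpt T
    _ = s i - s j := by
        rw [Finset.sum_sub_distrib, hA i, hA j]
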